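/- If an ideal I of a ring R is a strongly weak nil clean ideal, then I is a strongly weakly clean ideal, and for each a in I, either a - a² is nilpotent or a + a² is nilpotent. -/

import Mathlib

/-- A strongly weak nil clean ideal is a strongly weakly clean ideal,
and each `a ∈ I` has `a - a²` or `a + a²` nilpotent. -/
theorem stronglyWeakNilCleanIdeal_stronglyWeaklyClean {R : Type*} [Ring R] (I : TwoSidedIdeal R)
    (h : ∀ x ∈ I, ∃ e n : R, IsIdempotentElem e ∧ IsNilpotent n ∧ e * n = n * e ∧
      (x = e + n ∨ x = -e + n)) :
    (∀ x ∈ I, ∃ e u : R, IsIdempotentElem e ∧ IsUnit u ∧ e * u = u * e ∧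
      (x = e + u ∨ x = -e + u)) ∧
    (∀ a ∈ I, IsNilpotent (a - a ^ 2) ∨ IsNilpotent (a + a ^ 2)) := by
  constructor
  · intro x hx
    obtain ⟨e, n, he, hn, hcomm, hx⟩ := h x hx
    have h2 : e * e = e := he
    have key : (2 * e - 1) * (2 * e - 1) = 1 := by
      calc (2 * e - 1) * (2 * e - 1) = 4 * (e * e) - 4 * e + 1 := by noncomm_ring
        _ = 1 := by rw [h2]; noncomm_ring
    have hu1 : IsUnit (2 * e - 1) := ⟨⟨2 * e - 1, 2 * e - 1, key, key⟩, rfl⟩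
    have hcomm' : Commute n (2 * e - 1) := by
      have : Commute n e := hcomm.symm
      have : Commute n (2 * e) := by
        simpa [two_mul] using (this.add_right this)
      exact this.sub_right (Commute.one_right n)
    rcases hx with hx | hx
    · refine ⟨1 - e, n + (2 * e - 1), ?_, hn.isUnit_add_right_of_commute hu1 hcomm', ?_, Or.inl ?_⟩
      · unfold IsIdempotentElem; noncomm_ring; rw [h2]; abel
      · have c1 : Commute (1 - e) n := by
          exact ((Commute.one_left n).sub_left (hcomm))
        have c2 : Commute (1 - e) (2 * e - 1) := by
          have ce : Commute (1 - e) e := ((Commute.one_left e).sub_left (Commute.refl e))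
          have : Commute (1 - e) (2 * e) := by simpa [two_mul] using ce.add_right ce
          exact this.sub_right (Commute.one_right _)
        exact (c1.add_right c2)
      · rw [hx]; noncomm_ring
    · refine ⟨1 - e, n + -(2 * e - 1), ?_, ?_, ?_, Or.inr ?_⟩
      · unfold IsIdempotentElem; noncomm_ring; rw [h2]; abel
      · exact hn.isUnit_add_right_of_commute hu1.neg hcomm'.neg_right
      · have c1 : Commute (1 - e) n := ((Commute.one_left n).sub_left (hcomm))
        have ce : Commute (1 - e) e := ((Commute.one_left e).sub_left (Commute.refl e))
        have c2 : Commute (1 - e) (2 * e - 1) := by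
          have : Commute (1 - e) (2 * e) := by simpa [two_mul] using ce.add_right ce
          exact this.sub_right (Commute.one_right _)
        exact (c1.add_right c2.neg_right)
      · rw [hx]; noncomm_ring
  · intro a ha
    obtain ⟨e, n, he, hn, hcomm, hx⟩ := h a ha
    have h2 : e * e = e := he
    rcases hx with hx | hx
    · left
      have : a - a ^ 2 = n * (1 - 2 * e - n) := by
        have expand : (e + n) * (e + n) = e + n * e + n * e + n * n := by
          rw [mul_add, add_mul, add_mul, h2, hcomm]; abel
        rw [hx, pow_two, expand]; noncomm_ring
      rw [this]
      refine (Commute.isNilpotent_mul_right ?_ hn)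
      have c1 : Commute n e := hcomm.symm
      have : Commute n (2 * e) := by simpa [two_mul] using c1.add_right c1
      exact ((Commute.one_right n).sub_right this).sub_right (Commute.refl n)
    · right
      have : a + a ^ 2 = n * (1 - 2 * e + n) := by
        have expand : (-e + n) * (-e + n) = e - n * e - n * e + n * n := by
          rw [mul_add, add_mul, add_mul, neg_mul_neg, h2, neg_mul, mul_neg, hcomm]; abel
        rw [hx, pow_two, expand]; noncomm_ring
      rw [this]
      refine (Commute.isNilpotent_mul_right ?_ hn)
      have c1 : Commute n e := hcomm.symm
      have : Commute n (2 * e) := by simpa [two_mul] using c1.add_right c1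
      exact ((Commute.one_right n).sub_right this).add_right (Commute.refl n)
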